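/- Let m, n be positive integers, λ_{ij} > 0 for 1 ≤ i ≤ m, 1 ≤ j ≤ n, α_i = ∑_{j=1}^n λ_{ij}, β_j = ∑_{i=1}^m λ_{ij}, and take ρ = 2. Then the logarithmic derivative (ln f)'(t) = f'(t)/f(t) of f(t) = [∏_{i=1}^m Γ(1+α_i t) · ∏_{j=1}^n Γ(1+β_j t)] / [∏_{i=1}^m ∏_{j=1}^n Γ(1+λ_{ij} t)]² is a Bernstein function on (0, ∞): (ln f)'(t) ≥ 0 for all t > 0, and its derivative (ln f)'' is completely monotonic on (0, ∞). -/

import Mathlib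

open Finset Filter

namespace BernsteinAux

lemma abs_log_one_add_sub_le {x : ℝ} (hx : 0 ≤ x) : |Real.log (1 + x) - x| ≤ x ^ 2 := by
  have hx1 : (0:ℝ) < 1 + x := by linarith
  have h1 : Real.log (1 + x) ≤ x := by
    have := Real.log_le_sub_one_of_pos hx1; linarith
  have h2 : 1 - (1 + x)⁻¹ ≤ Real.log (1 + x) := Real.one_sub_inv_le_log_of_pos hx1
  have h4 : (1 + x)⁻¹ * (1 + x) = 1 := inv_mul_cancel₀ hx1.ne'
  have h5 : 0 ≤ (1 + x)⁻¹ := by positivity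
  have h3 : x - x ^ 2 ≤ 1 - (1 + x)⁻¹ := by nlinarith [sq_nonneg x, pow_pos hx1 3]
  rw [abs_le]
  constructor
  · nlinarith
  · nlinarith [sq_nonneg x]

lemma summable_aux (C : ℝ) {p : ℕ} (hp : 2 ≤ p) :
    Summable (fun k : ℕ => C / ((k : ℝ) + 1) ^ p) := by
  have h : Summable (fun n : ℕ => 1 / (n : ℝ) ^ p) :=
    Real.summable_one_div_nat_pow.mpr (by omega)
  have h2 : Summable (fun n : ℕ => 1 / ((n : ℝ) + 1) ^ p) := by
    have := (summable_nat_add_iff (f := fun n : ℕ => 1 / (n : ℝ) ^ p) 1).mpr h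
    simpa using this
  simpa [mul_one_div, div_eq_mul_inv] using h2.mul_left C

variable {ι : Type*} [Fintype ι]

noncomputable def cc (ε v : ι → ℝ) (k : ℕ) (t : ℝ) : ℝ :=
  ∑ z, -ε z * Real.log (1 + v z * t / ((k : ℝ) + 1))

noncomputable def VV (ε v : ι → ℝ) (p k : ℕ) (t : ℝ) : ℝ :=
  ∑ z, ε z * (v z / (((k : ℝ) + 1) + v z * t)) ^ p

noncomputable def SS (ε v : ι → ℝ) (p : ℕ) (t : ℝ) : ℝ := ∑' k, VV ε v p k t

lemma den_pos {a t : ℝ} (ha : 0 < a) (ht : 0 ≤ t) (k : ℕ) :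
    0 < ((k : ℝ) + 1) + a * t := by positivity

lemma term_nonneg {a t : ℝ} (ha : 0 < a) (ht : 0 ≤ t) (p k : ℕ) :
    0 ≤ (a / (((k : ℝ) + 1) + a * t)) ^ p := by positivity

lemma term_le {a t : ℝ} (ha : 0 < a) (ht : 0 ≤ t) (p k : ℕ) :
    (a / (((k : ℝ) + 1) + a * t)) ^ p ≤ a ^ p / ((k : ℝ) + 1) ^ p := by
  rw [div_pow]
  apply div_le_div_of_nonneg_left (by positivity) (by positivity)
  exact pow_le_pow_left₀ (by positivity) (by nlinarith [mul_nonneg ha.le ht]) p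

lemma abs_VV_le (ε v : ι → ℝ) (hv : ∀ z, 0 < v z) (p k : ℕ) {t : ℝ} (ht : 0 ≤ t) :
    |VV ε v p k t| ≤ (∑ z, |ε z| * v z ^ p) / ((k : ℝ) + 1) ^ p := by
  calc |VV ε v p k t| ≤ ∑ z, |ε z * (v z / (((k : ℝ) + 1) + v z * t)) ^ p| :=
        Finset.abs_sum_le_sum_abs _ _
    _ ≤ ∑ z, |ε z| * (v z ^ p / ((k : ℝ) + 1) ^ p) := by
        apply Finset.sum_le_sum
        intro z _
        rw [abs_mul, abs_of_nonneg (term_nonneg (hv z) ht p k)]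
        exact mul_le_mul_of_nonneg_left (term_le (hv z) ht p k) (abs_nonneg _)
    _ = (∑ z, |ε z| * v z ^ p) / ((k : ℝ) + 1) ^ p := by
        rw [Finset.sum_div]
        exact Finset.sum_congr rfl fun z _ => by rw [mul_div_assoc]

lemma summable_VV (ε v : ι → ℝ) (hv : ∀ z, 0 < v z) {p : ℕ} (hp : 2 ≤ p) {t : ℝ}
    (ht : 0 ≤ t) : Summable (fun k => VV ε v p k t) := by
  apply summable_sum
  intro z _
  apply Summable.mul_left
  apply Summable.of_nonneg_of_le (fun k => term_nonneg (hv z) ht p k)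
    (fun k => term_le (hv z) ht p k)
  simpa [div_eq_mul_inv] using summable_aux (v z ^ p) hp

lemma VV_one_eq (ε v : ι → ℝ) (hv : ∀ z, 0 < v z) (hεv : ∑ z, ε z * v z = 0)
    (k : ℕ) {t : ℝ} (ht : 0 ≤ t) :
    VV ε v 1 k t
      = -t * ∑ z, ε z * (v z ^ 2 / (((k : ℝ) + 1) * (((k : ℝ) + 1) + v z * t))) := by
  have hK : (0:ℝ) < (k:ℝ) + 1 := by positivity
  have key : ∀ z, ε z * (v z / (((k:ℝ)+1) + v z * t)) ^ 1
      = ε z * v z / ((k:ℝ)+1)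
        + -t * (ε z * (v z ^ 2 / (((k:ℝ)+1) * (((k:ℝ)+1) + v z * t)))) := by
    intro z
    have hd := den_pos (hv z) ht k
    field_simp
    ring
  rw [VV, Finset.sum_congr rfl fun z _ => key z, Finset.sum_add_distrib,
    ← Finset.sum_div, hεv, ← Finset.mul_sum]
  simp

lemma abs_VV_one_le (ε v : ι → ℝ) (hv : ∀ z, 0 < v z) (hεv : ∑ z, ε z * v z = 0)
    (k : ℕ) {t : ℝ} (ht : 0 ≤ t) :
    |VV ε v 1 k t| ≤ t * (∑ z, |ε z| * v z ^ 2) / ((k : ℝ) + 1) ^ 2 := by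
  have hK : (0:ℝ) < (k:ℝ) + 1 := by positivity
  rw [VV_one_eq ε v hv hεv k ht, abs_mul, abs_neg, abs_of_nonneg ht, mul_div_assoc]
  apply mul_le_mul_of_nonneg_left _ ht
  calc |∑ z, ε z * (v z ^ 2 / (((k:ℝ)+1) * (((k:ℝ)+1) + v z * t)))|
      ≤ ∑ z, |ε z * (v z ^ 2 / (((k:ℝ)+1) * (((k:ℝ)+1) + v z * t)))| :=
        Finset.abs_sum_le_sum_abs _ _
    _ ≤ ∑ z, |ε z| * (v z ^ 2 / ((k:ℝ)+1) ^ 2) := by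
        apply Finset.sum_le_sum
        intro z _
        have hd := den_pos (hv z) ht k
        have hden : (0:ℝ) < ((k:ℝ)+1) * (((k:ℝ)+1) + v z * t) := mul_pos hK hd
        have hnn : (0:ℝ) ≤ v z ^ 2 / (((k:ℝ)+1) * (((k:ℝ)+1) + v z * t)) :=
          div_nonneg (by positivity) hden.le
        rw [abs_mul, abs_of_nonneg hnn]
        apply mul_le_mul_of_nonneg_left _ (abs_nonneg _)
        apply div_le_div_of_nonneg_left (by positivity) (by positivity)
        nlinarith [mul_nonneg (mul_nonneg (hv z).le ht) hK.le]
    _ = (∑ z, |ε z| * v z ^ 2) / ((k:ℝ)+1) ^ 2 := by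
        rw [Finset.sum_div]
        exact Finset.sum_congr rfl fun z _ => by rw [mul_div_assoc]

lemma summable_VV_one (ε v : ι → ℝ) (hv : ∀ z, 0 < v z) (hεv : ∑ z, ε z * v z = 0)
    {t : ℝ} (ht : 0 ≤ t) : Summable (fun k => VV ε v 1 k t) := by
  apply Summable.of_abs
  apply Summable.of_nonneg_of_le (fun k => abs_nonneg _)
    (fun k => abs_VV_one_le ε v hv hεv k ht)
  exact summable_aux (t * ∑ z, |ε z| * v z ^ 2) le_rfl




lemma hasDerivAt_term (a : ℝ) (ha : 0 < a) (k : ℕ) {p : ℕ} (hp : 1 ≤ p) {t : ℝ}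
    (ht : 0 ≤ t) :
    HasDerivAt (fun s => (a / (((k:ℝ)+1) + a*s)) ^ p)
      (-(p:ℝ) * (a / (((k:ℝ)+1) + a*t)) ^ (p+1)) t := by
  obtain ⟨q, rfl⟩ : ∃ q, p = q + 1 := ⟨p - 1, by omega⟩
  have hd := den_pos ha ht k
  have h1 : HasDerivAt (fun s : ℝ => ((k:ℝ)+1) + a*s) a t := by
    simpa using ((hasDerivAt_id t).const_mul a).const_add ((k:ℝ)+1)
  have h2 := h1.inv hd.ne'
  have h3 := (h2.const_mul a).pow (q+1)
  have hfun : (fun s => (a / (((k:ℝ)+1) + a*s)) ^ (q+1))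
      = fun s => (a * (((k:ℝ)+1) + a*s)⁻¹) ^ (q+1) := by
    funext s; rw [div_eq_mul_inv]
  rw [hfun]
  convert h3 using 1
  · rfl
  · rfl
  · rfl
  simp only [Nat.add_sub_cancel, Pi.inv_apply]
  have hdne : (((k:ℝ)+1) + a*t) ≠ 0 := hd.ne'
  simp only [div_eq_mul_inv, mul_pow, inv_pow]
  field_simp
  ring

lemma hasDerivAt_logterm (a : ℝ) (ha : 0 < a) (k : ℕ) {t : ℝ} (ht : 0 ≤ t) :
    HasDerivAt (fun s => Real.log (1 + a * s / ((k:ℝ)+1)))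
      (a / (((k:ℝ)+1) + a*t)) t := by
  have hK : (0:ℝ) < (k:ℝ)+1 := by positivity
  have harg : 0 < 1 + a * t / ((k:ℝ)+1) := by positivity
  have h1 : HasDerivAt (fun s : ℝ => 1 + a * s / ((k:ℝ)+1)) (a / ((k:ℝ)+1)) t := by
    simpa using (((hasDerivAt_id t).const_mul a).div_const ((k:ℝ)+1)).const_add 1
  have h2 := h1.log harg.ne'
  convert h2 using 1
  have hd := den_pos ha ht k
  field_simp

lemma hasDerivAt_cc (ε v : ι → ℝ) (hv : ∀ z, 0 < v z) (k : ℕ) {t : ℝ} (ht : 0 ≤ t) :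
    HasDerivAt (fun s => cc ε v k s) (-VV ε v 1 k t) t := by
  have h : HasDerivAt (fun s => ∑ z, -ε z * Real.log (1 + v z * s / ((k:ℝ)+1)))
      (∑ z, -ε z * (v z / (((k:ℝ)+1) + v z * t))) t :=
    HasDerivAt.fun_sum fun z _ => (hasDerivAt_logterm (v z) (hv z) k ht).const_mul (-ε z)
  have e : -VV ε v 1 k t = ∑ z, -ε z * (v z / (((k:ℝ)+1) + v z * t)) := by
    rw [VV, ← Finset.sum_neg_distrib]
    exact Finset.sum_congr rfl fun z _ => by ring
  rw [show (fun s => cc ε v k s) = fun s => ∑ z, -ε z * Real.log (1 + v z * s / ((k:ℝ)+1))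
    from rfl, e]
  exact h

lemma hasDerivAt_VV (ε v : ι → ℝ) (hv : ∀ z, 0 < v z) {p : ℕ} (hp : 1 ≤ p) (k : ℕ)
    {t : ℝ} (ht : 0 ≤ t) :
    HasDerivAt (fun s => VV ε v p k s) (-(p:ℝ) * VV ε v (p+1) k t) t := by
  have h : HasDerivAt (fun s => ∑ z, ε z * (v z / (((k:ℝ)+1) + v z * s)) ^ p)
      (∑ z, ε z * (-(p:ℝ) * (v z / (((k:ℝ)+1) + v z * t)) ^ (p+1))) t :=
    HasDerivAt.fun_sum fun z _ => (hasDerivAt_term (v z) (hv z) k hp ht).const_mul (ε z)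
  have e : -(p:ℝ) * VV ε v (p+1) k t
      = ∑ z, ε z * (-(p:ℝ) * (v z / (((k:ℝ)+1) + v z * t)) ^ (p+1)) := by
    rw [VV, Finset.mul_sum]
    exact Finset.sum_congr rfl fun z _ => by ring
  rw [show (fun s => VV ε v p k s) = fun s => ∑ z, ε z * (v z / (((k:ℝ)+1) + v z * s)) ^ p
    from rfl, e]
  exact h


lemma abs_cc_le (ε v : ι → ℝ) (hv : ∀ z, 0 < v z) (hεv : ∑ z, ε z * v z = 0)
    (k : ℕ) {t : ℝ} (ht : 0 ≤ t) :
    |cc ε v k t| ≤ (∑ z, |ε z| * v z ^ 2) * t ^ 2 / ((k : ℝ) + 1) ^ 2 := by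
  have hK : (0:ℝ) < (k:ℝ) + 1 := by positivity
  have h0 : ∑ z, ε z * (v z * t / ((k:ℝ)+1)) = 0 := by
    calc ∑ z, ε z * (v z * t / ((k:ℝ)+1)) = ∑ z, (ε z * v z) * (t / ((k:ℝ)+1)) := by
          exact Finset.sum_congr rfl fun z _ => by ring
      _ = (∑ z, ε z * v z) * (t / ((k:ℝ)+1)) := by rw [← Finset.sum_mul]
      _ = 0 := by rw [hεv, zero_mul]
  have hrw : cc ε v k t
      = ∑ z, -ε z * (Real.log (1 + v z * t / ((k:ℝ)+1)) - v z * t / ((k:ℝ)+1)) := by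
    rw [cc]
    rw [Finset.sum_congr rfl (fun z _ => by
      show -ε z * Real.log (1 + v z * t / ((k:ℝ)+1))
        = -ε z * (Real.log (1 + v z * t / ((k:ℝ)+1)) - v z * t / ((k:ℝ)+1))
          - ε z * (v z * t / ((k:ℝ)+1))
      ring), Finset.sum_sub_distrib, h0, sub_zero]
  rw [hrw]
  calc |∑ z, -ε z * (Real.log (1 + v z * t / ((k:ℝ)+1)) - v z * t / ((k:ℝ)+1))|
      ≤ ∑ z, |(-ε z) * (Real.log (1 + v z * t / ((k:ℝ)+1)) - v z * t / ((k:ℝ)+1))| :=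
        Finset.abs_sum_le_sum_abs _ _
    _ ≤ ∑ z, |ε z| * ((v z * t / ((k:ℝ)+1)) ^ 2) := by
        apply Finset.sum_le_sum
        intro z _
        rw [abs_mul, abs_neg]
        apply mul_le_mul_of_nonneg_left _ (abs_nonneg _)
        exact abs_log_one_add_sub_le (div_nonneg (mul_nonneg (hv z).le ht) hK.le)
    _ = (∑ z, |ε z| * v z ^ 2) * t ^ 2 / ((k : ℝ) + 1) ^ 2 := by
        rw [Finset.sum_mul, Finset.sum_div]
        apply Finset.sum_congr rfl
        intro z _
        rw [div_pow, mul_pow]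
        ring

lemma summable_cc (ε v : ι → ℝ) (hv : ∀ z, 0 < v z) (hεv : ∑ z, ε z * v z = 0)
    {t : ℝ} (ht : 0 ≤ t) : Summable (fun k => cc ε v k t) := by
  apply Summable.of_abs
  apply Summable.of_nonneg_of_le (fun k => abs_nonneg _)
    (fun k => abs_cc_le ε v hv hεv k ht)
  exact summable_aux ((∑ z, |ε z| * v z ^ 2) * t ^ 2) le_rfl

lemma hasDerivAt_SS (ε v : ι → ℝ) (hv : ∀ z, 0 < v z) (hεv : ∑ z, ε z * v z = 0)
    {p : ℕ} (hp : 1 ≤ p) {t : ℝ} (ht : 0 < t) :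
    HasDerivAt (SS ε v p) (-(p:ℝ) * SS ε v (p+1) t) t := by
  have key := hasDerivAt_tsum_of_isPreconnected
    (u := fun k : ℕ => (p:ℝ) * (∑ z, |ε z| * v z ^ (p+1)) / ((k:ℝ)+1) ^ (p+1))
    (g := fun k s => VV ε v p k s) (g' := fun k s => -(p:ℝ) * VV ε v (p+1) k s)
    (t := Set.Ioi (0:ℝ)) (y₀ := t) (y := t)
    (summable_aux ((p:ℝ) * ∑ z, |ε z| * v z ^ (p+1)) (by omega))
    isOpen_Ioi isPreconnected_Ioi
    (fun k s hs => hasDerivAt_VV ε v hv hp k (le_of_lt hs))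
    (fun k s hs => by
      have hb := abs_VV_le ε v hv (p+1) k (le_of_lt hs)
      show ‖-(p:ℝ) * VV ε v (p+1) k s‖ ≤ (p:ℝ) * (∑ z, |ε z| * v z ^ (p+1)) / ((k:ℝ)+1) ^ (p+1)
      rw [Real.norm_eq_abs, abs_mul, abs_neg, abs_of_nonneg (Nat.cast_nonneg p), mul_div_assoc]
      exact mul_le_mul_of_nonneg_left hb (Nat.cast_nonneg p))
    ht
    (by
      rcases eq_or_lt_of_le hp with h1 | h2
      · rw [← h1]; exact summable_VV_one ε v hv hεv ht.le
      · exact summable_VV ε v hv (by omega) ht.le)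
    ht
  have : (∑' k, -(p:ℝ) * VV ε v (p+1) k t) = -(p:ℝ) * SS ε v (p+1) t := by
    rw [tsum_mul_left]; rfl
  rw [← this]
  exact key

lemma hasDerivAt_G (ε v : ι → ℝ) (hv : ∀ z, 0 < v z) (hεv : ∑ z, ε z * v z = 0)
    {t : ℝ} (ht : 0 < t) :
    HasDerivAt (fun s => ∑' k, cc ε v k s) (-SS ε v 1 t) t := by
  have hC : 0 ≤ ∑ z, |ε z| * v z ^ 2 :=
    Finset.sum_nonneg fun z _ => mul_nonneg (abs_nonneg _) (by positivity)
  have key := hasDerivAt_tsum_of_isPreconnected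
    (u := fun k : ℕ => (t+1) * (∑ z, |ε z| * v z ^ 2) / ((k:ℝ)+1) ^ 2)
    (g := fun k s => cc ε v k s) (g' := fun k s => -VV ε v 1 k s)
    (t := Set.Ioo (0:ℝ) (t+1)) (y₀ := t) (y := t)
    (summable_aux ((t+1) * ∑ z, |ε z| * v z ^ 2) le_rfl)
    isOpen_Ioo isPreconnected_Ioo
    (fun k s hs => hasDerivAt_cc ε v hv k (le_of_lt hs.1))
    (fun k s hs => by
      rw [Real.norm_eq_abs, abs_neg]
      calc |VV ε v 1 k s| ≤ s * (∑ z, |ε z| * v z ^ 2) / ((k:ℝ)+1) ^ 2 :=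
            abs_VV_one_le ε v hv hεv k (le_of_lt hs.1)
        _ ≤ (t+1) * (∑ z, |ε z| * v z ^ 2) / ((k:ℝ)+1) ^ 2 := by
            apply div_le_div_of_nonneg_right _ (by positivity)
            exact mul_le_mul_of_nonneg_right hs.2.le hC)
    (by constructor <;> linarith)
    (summable_cc ε v hv hεv ht.le)
    (by constructor <;> linarith)
  have : (∑' k, -VV ε v 1 k t) = -SS ε v 1 t := by
    rw [tsum_neg]; rfl
  rw [← this]
  exact key

lemma log_GammaSeq (a : ℝ) (ha : 0 < a) {t : ℝ} (ht : 0 < t) {N : ℕ} (hN : 1 ≤ N) :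
    Real.log (Real.GammaSeq (1 + a * t) N)
      = (1 + a * t) * Real.log N - Real.log ((N : ℝ) + 1)
        - ∑ k ∈ range (N + 1), Real.log (1 + a * t / ((k:ℝ) + 1)) := by
  have hat : 0 < a * t := mul_pos ha ht
  have hNpos : (0:ℝ) < (N:ℝ) := by exact_mod_cast hN
  have hfac : (0:ℝ) < (N.factorial : ℝ) := by exact_mod_cast N.factorial_pos
  have hden : ∀ j ∈ range (N + 1), (0:ℝ) < 1 + a * t + (j:ℝ) := by
    intro j _; positivity
  have hprod : (0:ℝ) < ∏ j ∈ range (N + 1), (1 + a * t + (j:ℝ)) :=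
    Finset.prod_pos hden
  rw [Real.GammaSeq]
  rw [Real.log_div (by positivity) hprod.ne', Real.log_mul (by positivity) hfac.ne',
    Real.log_rpow hNpos, Real.log_prod (fun j hj => (hden j hj).ne')]
  have hlogfac : Real.log (N.factorial : ℝ) = ∑ k ∈ range N, Real.log ((k:ℝ) + 1) := by
    rw [← Finset.prod_range_add_one_eq_factorial, Nat.cast_prod]
    rw [Real.log_prod (fun k _ => by positivity)]
    push_cast
    rfl
  have hsplit : ∀ j ∈ range (N + 1), Real.log (1 + a * t + (j:ℝ))
      = Real.log ((j:ℝ) + 1) + Real.log (1 + a * t / ((j:ℝ) + 1)) := by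
    intro j _
    have hj1 : (0:ℝ) < (j:ℝ) + 1 := by positivity
    rw [← Real.log_mul hj1.ne' (by positivity)]
    congr 1
    field_simp
    ring
  rw [Finset.sum_congr rfl hsplit, Finset.sum_add_distrib, hlogfac]
  have : ∑ j ∈ range (N + 1), Real.log ((j:ℝ) + 1)
      = (∑ k ∈ range N, Real.log ((k:ℝ) + 1)) + Real.log ((N:ℝ) + 1) := by
    rw [Finset.sum_range_succ]
  rw [this]
  ring


lemma hasSum_cc (ε v : ι → ℝ) (hv : ∀ z, 0 < v z) (hεv : ∑ z, ε z * v z = 0)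
    (L : ℝ) {t : ℝ} (ht : 0 < t)
    (hL : L = ∑ z, ε z * Real.log (Real.Gamma (1 + v z * t))) :
    HasSum (fun k => cc ε v k t) L := by
  have hsum : Summable (fun k => cc ε v k t) := summable_cc ε v hv hεv ht.le
  -- partial sums identity
  have key : ∀ N : ℕ, 1 ≤ N → ∑ k ∈ range (N+1), cc ε v k t
      = (∑ z, ε z * Real.log (Real.GammaSeq (1 + v z * t) N))
        - (∑ z, ε z) * (Real.log N - Real.log ((N:ℝ)+1)) := by
    intro N hN
    have h1 : ∀ z : ι, ε z * Real.log (Real.GammaSeq (1 + v z * t) N)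
        = (ε z * Real.log N + (ε z * v z) * (t * Real.log N)) - ε z * Real.log ((N:ℝ)+1)
          + ∑ k ∈ range (N+1), (-ε z * Real.log (1 + v z * t / ((k:ℝ)+1))) := by
      intro z
      rw [log_GammaSeq (v z) (hv z) ht hN, mul_sub, mul_sub, Finset.mul_sum]
      simp only [neg_mul]
      rw [Finset.sum_neg_distrib]
      ring
    have h2 : (∑ z, ε z * Real.log (Real.GammaSeq (1 + v z * t) N))
        = (∑ z, ε z) * Real.log N - (∑ z, ε z) * Real.log ((N:ℝ)+1)
          + ∑ k ∈ range (N+1), cc ε v k t := by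
      rw [Finset.sum_congr rfl fun z _ => h1 z]
      rw [Finset.sum_add_distrib, Finset.sum_sub_distrib]
      congr 1
      · congr 1
        · rw [Finset.sum_add_distrib, ← Finset.sum_mul, ← Finset.sum_mul, hεv, zero_mul,
            add_zero, Finset.sum_mul]
        · rw [← Finset.sum_mul]
      · rw [Finset.sum_comm]
        apply Finset.sum_congr rfl
        intro k _
        rw [cc]
    rw [h2]
    ring
  -- limits
  have hTL : Tendsto (fun N : ℕ => ∑ z, ε z * Real.log (Real.GammaSeq (1 + v z * t) N))
      atTop (nhds L) := by
    rw [hL]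
    apply tendsto_finset_sum
    intro z _
    have hpos : 0 < Real.Gamma (1 + v z * t) :=
      Real.Gamma_pos_of_pos (by have := mul_pos (hv z) ht; linarith)
    exact (((Real.continuousAt_log hpos.ne').tendsto).comp
      (Real.GammaSeq_tendsto_Gamma (1 + v z * t))).const_mul (ε z)
  have hlog0 : Tendsto (fun N : ℕ => Real.log N - Real.log ((N:ℝ)+1)) atTop (nhds 0) := by
    have ha : Tendsto (fun N : ℕ => 1 + 1/(N:ℝ)) atTop (nhds 1) := by
      have := tendsto_one_div_atTop_nhds_zero_nat (𝕜 := ℝ)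
      simpa using (tendsto_const_nhds (x := (1:ℝ)) (f := atTop)).add this
    have hb : Tendsto (fun N : ℕ => -Real.log (1 + 1/(N:ℝ))) atTop (nhds 0) := by
      have := ((Real.continuousAt_log one_ne_zero).tendsto).comp ha
      rw [Real.log_one] at this
      simpa using this.neg
    apply hb.congr'
    filter_upwards [eventually_ge_atTop 1] with N hN
    have hNpos : (0:ℝ) < (N:ℝ) := by exact_mod_cast hN
    have : 1 + 1/(N:ℝ) = ((N:ℝ)+1)/(N:ℝ) := by field_simp
    rw [this, Real.log_div (by positivity) hNpos.ne']
    ring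
  have h3 : Tendsto (fun N : ℕ => ∑ k ∈ range (N+1), cc ε v k t) atTop (nhds L) := by
    have h4 : Tendsto (fun N : ℕ =>
        (∑ z, ε z * Real.log (Real.GammaSeq (1 + v z * t) N))
          - (∑ z, ε z) * (Real.log N - Real.log ((N:ℝ)+1))) atTop (nhds (L - (∑ z, ε z) * 0)) :=
      hTL.sub (hlog0.const_mul _)
    rw [mul_zero, sub_zero] at h4
    apply h4.congr'
    filter_upwards [eventually_ge_atTop 1] with N hN
    exact (key N hN).symm
  have h5 : Tendsto (fun N : ℕ => ∑ k ∈ range N, cc ε v k t) atTop (nhds L) :=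
    (tendsto_add_atTop_iff_nat 1).mp h3
  have h6 := hsum.hasSum.tendsto_sum_nat
  have : ∑' k, cc ε v k t = L := tendsto_nhds_unique h6 h5
  exact this ▸ hsum.hasSum


lemma merge_le (φ : ℝ → ℝ) (hmono : ∀ x y : ℝ, 0 < x → x ≤ y → φ y ≤ φ x)
    {a b : ℝ} (ha : 0 < a) (hb : 0 < b) :
    ∀ N K L : ℕ, K + L = N →
      ((∑ k ∈ range K, φ (((k:ℝ)+1)/a)) + ∑ l ∈ range L, φ (((l:ℝ)+1)/b))
        ≤ ∑ m ∈ range (K+L), φ (((m:ℝ)+1)/(a+b)) := by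
  intro N
  induction N with
  | zero =>
    intro K L h
    obtain ⟨rfl, rfl⟩ : K = 0 ∧ L = 0 := by omega
    simp
  | succ N ih =>
    intro K L hKL
    by_cases hc : (L:ℝ) * a ≤ (K:ℝ) * b
    · have hK : 1 ≤ K := by
        by_contra h
        have hK0 : K = 0 := by omega
        subst hK0
        have hL : 1 ≤ L := by omega
        have hLa : (0:ℝ) < (L:ℝ) * a := mul_pos (by exact_mod_cast hL) ha
        simp only [Nat.cast_zero, zero_mul] at hc
        linarith
      obtain ⟨K', rfl⟩ : ∃ K', K = K' + 1 := ⟨K - 1, by omega⟩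
      rw [Finset.sum_range_succ, show K' + 1 + L = (K' + L) + 1 by omega,
        Finset.sum_range_succ]
      have hmain : φ (((K':ℝ)+1)/a) ≤ φ ((((K' + L : ℕ):ℝ)+1)/(a+b)) := by
        apply hmono _ _ (by positivity)
        rw [div_le_div_iff₀ (by positivity) (by positivity)]
        push_cast at hc ⊢
        nlinarith
      have hih := ih K' L (by omega)
      calc (∑ k ∈ range K', φ (((k:ℝ)+1)/a)) + φ (((K':ℝ)+1)/a)
            + ∑ l ∈ range L, φ (((l:ℝ)+1)/b)
          = ((∑ k ∈ range K', φ (((k:ℝ)+1)/a)) + ∑ l ∈ range L, φ (((l:ℝ)+1)/b))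
            + φ (((K':ℝ)+1)/a) := by ring
        _ ≤ (∑ m ∈ range (K'+L), φ (((m:ℝ)+1)/(a+b))) + φ ((((K' + L : ℕ):ℝ)+1)/(a+b)) :=
            add_le_add hih hmain
        _ = _ := by norm_num
    · push_neg at hc
      have hL : 1 ≤ L := by
        by_contra h
        have hL0 : L = 0 := by omega
        subst hL0
        have : (0:ℝ) ≤ (K:ℝ) * b := mul_nonneg (by positivity) hb.le
        simp only [Nat.cast_zero, zero_mul] at hc
        linarith
      obtain ⟨L', rfl⟩ : ∃ L', L = L' + 1 := ⟨L - 1, by omega⟩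
      rw [Finset.sum_range_succ, show K + (L' + 1) = (K + L') + 1 by omega,
        Finset.sum_range_succ]
      have hmain : φ (((L':ℝ)+1)/b) ≤ φ ((((K + L' : ℕ):ℝ)+1)/(a+b)) := by
        apply hmono _ _ (by positivity)
        rw [div_le_div_iff₀ (by positivity) (by positivity)]
        push_cast at hc ⊢
        nlinarith
      have hih := ih K L' (by omega)
      calc (∑ k ∈ range K, φ (((k:ℝ)+1)/a))
            + ((∑ l ∈ range L', φ (((l:ℝ)+1)/b)) + φ (((L':ℝ)+1)/b))
          = ((∑ k ∈ range K, φ (((k:ℝ)+1)/a)) + ∑ l ∈ range L', φ (((l:ℝ)+1)/b))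
            + φ (((L':ℝ)+1)/b) := by ring
        _ ≤ (∑ m ∈ range (K+L'), φ (((m:ℝ)+1)/(a+b))) + φ ((((K + L' : ℕ):ℝ)+1)/(a+b)) :=
            add_le_add hih hmain
        _ = _ := by norm_num

lemma tsum_superadd (φ : ℝ → ℝ) (hmono : ∀ x y : ℝ, 0 < x → x ≤ y → φ y ≤ φ x)
    (hnn : ∀ x : ℝ, 0 < x → 0 ≤ φ x) {a b : ℝ} (ha : 0 < a) (hb : 0 < b)
    (hsa : Summable fun k : ℕ => φ (((k:ℝ)+1)/a))
    (hsb : Summable fun k : ℕ => φ (((k:ℝ)+1)/b))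
    (hsab : Summable fun k : ℕ => φ (((k:ℝ)+1)/(a+b))) :
    (∑' k : ℕ, φ (((k:ℝ)+1)/a)) + ∑' k : ℕ, φ (((k:ℝ)+1)/b)
      ≤ ∑' k : ℕ, φ (((k:ℝ)+1)/(a+b)) := by
  have hlim := (hsa.hasSum.tendsto_sum_nat).add (hsb.hasSum.tendsto_sum_nat)
  apply le_of_tendsto hlim
  filter_upwards with N
  calc (∑ k ∈ range N, φ (((k:ℝ)+1)/a)) + ∑ l ∈ range N, φ (((l:ℝ)+1)/b)
      ≤ ∑ m ∈ range (N+N), φ (((m:ℝ)+1)/(a+b)) :=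
        merge_le φ hmono ha hb (N+N) N N rfl
    _ ≤ ∑' k : ℕ, φ (((k:ℝ)+1)/(a+b)) :=
        Summable.sum_le_tsum _ (fun m _ => hnn _ (by positivity)) hsab

lemma tsum_superadd_finset {γ : Type*} (φ : ℝ → ℝ)
    (hmono : ∀ x y : ℝ, 0 < x → x ≤ y → φ y ≤ φ x)
    (hnn : ∀ x : ℝ, 0 < x → 0 ≤ φ x)
    (hsum : ∀ x : ℝ, 0 < x → Summable fun k : ℕ => φ (((k:ℝ)+1)/x))
    {s : Finset γ} (hs : s.Nonempty) {w : γ → ℝ} (hw : ∀ j, 0 < w j) :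
    (∑ j ∈ s, ∑' k : ℕ, φ (((k:ℝ)+1)/(w j)))
      ≤ ∑' k : ℕ, φ (((k:ℝ)+1)/(∑ j ∈ s, w j)) := by
  induction hs using Finset.Nonempty.cons_induction with
  | singleton a => simp
  | cons a s ha hs ih =>
    rw [Finset.sum_cons, Finset.sum_cons]
    have hws : 0 < ∑ j ∈ s, w j := Finset.sum_pos (fun j _ => hw j) hs
    calc (∑' k : ℕ, φ (((k:ℝ)+1)/(w a))) + ∑ j ∈ s, ∑' k : ℕ, φ (((k:ℝ)+1)/(w j))
        ≤ (∑' k : ℕ, φ (((k:ℝ)+1)/(w a))) + ∑' k : ℕ, φ (((k:ℝ)+1)/(∑ j ∈ s, w j)) :=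
          add_le_add_right ih _
      _ ≤ ∑' k : ℕ, φ (((k:ℝ)+1)/(w a + ∑ j ∈ s, w j)) :=
          tsum_superadd φ hmono hnn (hw a) hws (hsum _ (hw a)) (hsum _ hws)
            (hsum _ (add_pos (hw a) hws))

lemma sum_div_le_double {γ δ : Type*} [Fintype γ] [Fintype δ] [Nonempty δ]
    (c : γ → ℝ) (w : γ → δ → ℝ) (hw : ∀ i j, 0 < w i j)
    (hcw : ∀ i, c i = ∑ j, w i j) (K : ℝ) (hK : 0 < K) {t : ℝ} (ht : 0 ≤ t) :
    (∑ i, c i / (K + c i * t)) ≤ ∑ i, ∑ j, w i j / (K + w i j * t) := by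
  apply Finset.sum_le_sum
  intro i _
  have hc : 0 < c i := by
    rw [hcw i]; exact Finset.sum_pos (fun j _ => hw i j) Finset.univ_nonempty
  have hle : ∀ j, w i j ≤ c i := fun j => (hcw i) ▸
    Finset.single_le_sum (fun j' _ => (hw i j').le) (Finset.mem_univ j)
  calc c i / (K + c i * t)
      = ∑ j, w i j / (K + c i * t) := by
        nth_rewrite 1 [hcw i]; rw [Finset.sum_div]
    _ ≤ ∑ j, w i j / (K + w i j * t) := by
        apply Finset.sum_le_sum
        intro j _
        apply div_le_div_of_nonneg_left (hw i j).le
          (add_pos_of_pos_of_nonneg hK (mul_nonneg (hw i j).le ht))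
        nlinarith [hle j, ht]

end BernsteinAux

open BernsteinAux Finset Filter in
theorem bernstein_log_deriv_ratio_gamma
    (m n : ℕ) (hm : 0 < m) (hn : 0 < n)
    (lam : Fin m → Fin n → ℝ) (hlam : ∀ i j, 0 < lam i j)
    (α : Fin m → ℝ) (hα : ∀ i, α i = ∑ j : Fin n, lam i j)
    (β : Fin n → ℝ) (hβ : ∀ j, β j = ∑ i : Fin m, lam i j)
    (f : ℝ → ℝ)
    (hf : ∀ t, f t =
      ((∏ i : Fin m, Real.Gamma (1 + α i * t)) * ∏ j : Fin n, Real.Gamma (1 + β j * t)) /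
        (∏ i : Fin m, ∏ j : Fin n, Real.Gamma (1 + lam i j * t)) ^ 2) :
    (∀ t : ℝ, 0 < t → 0 ≤ deriv (fun s => Real.log (f s)) t) ∧
      (∀ (k : ℕ) (t : ℝ), 0 < t →
        0 ≤ (-1 : ℝ) ^ k *
          iteratedDeriv k (deriv (deriv (fun s => Real.log (f s)))) t) := by
  classical
  haveI : Nonempty (Fin m) := ⟨⟨0, hm⟩⟩
  haveI : Nonempty (Fin n) := ⟨⟨0, hn⟩⟩
  have hα' : ∀ i, 0 < α i := fun i => by
    rw [hα i]; exact Finset.sum_pos (fun j _ => hlam i j) Finset.univ_nonempty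
  have hβ' : ∀ j, 0 < β j := fun j => by
    rw [hβ j]; exact Finset.sum_pos (fun i _ => hlam i j) Finset.univ_nonempty
  set ε : (Fin m ⊕ Fin n) ⊕ (Fin m × Fin n) → ℝ :=
    Sum.elim (fun _ => 1) (fun _ => -2) with hεdef
  set v : (Fin m ⊕ Fin n) ⊕ (Fin m × Fin n) → ℝ :=
    Sum.elim (Sum.elim α β) (fun q => lam q.1 q.2) with hvdef
  have hv : ∀ z, 0 < v z := by
    rintro ((i | j) | ⟨i, j⟩)
    · exact hα' i
    · exact hβ' j
    · exact hlam i j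
  have hεv : ∑ z, ε z * v z = 0 := by
    have key : ∑ z, ε z * v z
        = (∑ i, α i) + (∑ j, β j) + -2 * ∑ i, ∑ j, lam i j := by
      simp only [hεdef, hvdef, Fintype.sum_sum_type, Fintype.sum_prod_type,
        Sum.elim_inl, Sum.elim_inr, one_mul]
      simp only [← Finset.mul_sum]
      try ring
    have h1 : ∑ i, α i = ∑ i, ∑ j, lam i j := Finset.sum_congr rfl fun i _ => hα i
    have h2 : ∑ j, β j = ∑ i, ∑ j, lam i j := by
      rw [Finset.sum_congr rfl fun j _ => hβ j]
      exact Finset.sum_comm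
    rw [key, h1, h2]; ring
  -- `log f` as a sum of log-Gammas
  have hlogf : ∀ t : ℝ, 0 < t →
      Real.log (f t) = ∑ z, ε z * Real.log (Real.Gamma (1 + v z * t)) := by
    intro t ht
    have hg : ∀ a : ℝ, 0 < a → (0:ℝ) < Real.Gamma (1 + a * t) := fun a hA =>
      Real.Gamma_pos_of_pos (by nlinarith)
    have hPi : (0:ℝ) < ∏ i, Real.Gamma (1 + α i * t) :=
      Finset.prod_pos fun i _ => hg _ (hα' i)
    have hPj : (0:ℝ) < ∏ j, Real.Gamma (1 + β j * t) :=
      Finset.prod_pos fun j _ => hg _ (hβ' j)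
    have hPij : (0:ℝ) < ∏ i, ∏ j, Real.Gamma (1 + lam i j * t) :=
      Finset.prod_pos fun i _ => Finset.prod_pos fun j _ => hg _ (hlam i j)
    rw [hf t, Real.log_div (mul_pos hPi hPj).ne' (pow_ne_zero 2 hPij.ne'),
      Real.log_mul hPi.ne' hPj.ne', Real.log_pow,
      Real.log_prod (fun i _ => (hg _ (hα' i)).ne'),
      Real.log_prod (fun j _ => (hg _ (hβ' j)).ne'),
      Real.log_prod (fun i _ =>
        (Finset.prod_pos fun j _ => hg _ (hlam i j)).ne'),
      Finset.sum_congr rfl (fun i _ =>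
        Real.log_prod (fun j _ => (hg _ (hlam i j)).ne'))]
    simp only [hεdef, hvdef, Fintype.sum_sum_type, Fintype.sum_prod_type,
      Sum.elim_inl, Sum.elim_inr, one_mul]
    simp only [← Finset.mul_sum]
    push_cast
    ring
  -- series representation and derivatives
  have hGf : ∀ t : ℝ, 0 < t → Real.log (f t) = ∑' k, cc ε v k t := fun t ht =>
    ((hasSum_cc ε v hv hεv _ ht (hlogf t ht)).tsum_eq).symm
  have hd1 : ∀ t : ℝ, 0 < t →
      deriv (fun s => Real.log (f s)) t = -SS ε v 1 t := by
    intro t ht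
    have hev : (fun s => Real.log (f s)) =ᶠ[nhds t] (fun s => ∑' k, cc ε v k s) := by
      filter_upwards [isOpen_Ioi.mem_nhds ht] with s hs using hGf s hs
    rw [hev.deriv_eq, (hasDerivAt_G ε v hv hεv ht).deriv]
  have hd2 : ∀ t : ℝ, 0 < t →
      deriv (deriv (fun s => Real.log (f s))) t = SS ε v 2 t := by
    intro t ht
    have hev : deriv (fun s => Real.log (f s)) =ᶠ[nhds t] (fun s => -SS ε v 1 s) := by
      filter_upwards [isOpen_Ioi.mem_nhds ht] with s hs using hd1 s hs
    rw [hev.deriv_eq]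
    have h := (hasDerivAt_SS ε v hv hεv le_rfl ht).neg
    rw [show (fun s => -SS ε v 1 s) = -SS ε v 1 from rfl, h.deriv]
    push_cast
    ring
  have hiter : ∀ j : ℕ, ∀ t : ℝ, 0 < t →
      iteratedDeriv j (deriv (deriv (fun s => Real.log (f s)))) t
        = (-1)^j * ((j+1).factorial : ℝ) * SS ε v (j+2) t := by
    intro j
    induction j with
    | zero =>
      intro t ht
      simpa [iteratedDeriv_zero] using hd2 t ht
    | succ j ih =>
      intro t ht
      rw [iteratedDeriv_succ]
      have hev : iteratedDeriv j (deriv (deriv (fun s => Real.log (f s)))) =ᶠ[nhds t]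
          (fun s => (-1)^j * ((j+1).factorial : ℝ) * SS ε v (j+2) s) := by
        filter_upwards [isOpen_Ioi.mem_nhds ht] with s hs using ih s hs
      rw [hev.deriv_eq]
      have h := (hasDerivAt_SS ε v hv hεv (p := j+2) (by omega) ht).const_mul
        ((-1)^j * ((j+1).factorial : ℝ))
      rw [h.deriv]
      have hfac : ((j+2 : ℕ) : ℝ) * ((j+1).factorial : ℝ) = ((j+2).factorial : ℝ) := by
        rw [← Nat.cast_mul]
        norm_cast
      show (-1)^j * ((j+1).factorial : ℝ) * (-((j+2:ℕ):ℝ) * SS ε v (j+2+1) t)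
        = (-1)^(j+1) * ((j+1+1).factorial : ℝ) * SS ε v (j+1+2) t
      rw [show j+1+2 = j+2+1 from rfl, ← hfac]
      push_cast
      ring
  -- sign of SS 1
  have hVV1 : ∀ (k : ℕ) (t : ℝ), 0 < t → VV ε v 1 k t ≤ 0 := by
    intro k t ht
    have hexp : VV ε v 1 k t
        = (∑ i, α i / (((k:ℝ)+1) + α i * t)) + (∑ j, β j / (((k:ℝ)+1) + β j * t))
          + -2 * ∑ i, ∑ j, lam i j / (((k:ℝ)+1) + lam i j * t) := by
      simp only [VV, hεdef, hvdef, Fintype.sum_sum_type, Fintype.sum_prod_type,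
        Sum.elim_inl, Sum.elim_inr, one_mul, pow_one]
      simp only [← Finset.mul_sum]
      try ring
    have hK1 : (0:ℝ) < (k:ℝ)+1 := by positivity
    have hA := sum_div_le_double α lam hlam hα ((k:ℝ)+1) hK1 ht.le
    have hB := sum_div_le_double β (fun j i => lam i j) (fun j i => hlam i j) hβ
      ((k:ℝ)+1) hK1 ht.le
    have hcomm : ∑ j, ∑ i, lam i j / (((k:ℝ)+1) + lam i j * t)
        = ∑ i, ∑ j, lam i j / (((k:ℝ)+1) + lam i j * t) := Finset.sum_comm
    rw [hexp]
    rw [hcomm] at hB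
    linarith
  have hSS1 : ∀ t : ℝ, 0 < t → SS ε v 1 t ≤ 0 := fun t ht =>
    tsum_nonpos fun k => hVV1 k t ht
  -- sign of SS p for p ≥ 2
  have hSSpos : ∀ p : ℕ, 2 ≤ p → ∀ t : ℝ, 0 < t → 0 ≤ SS ε v p t := by
    intro p hp t ht
    set φ : ℝ → ℝ := fun y => (1/(t + y))^p with hφ
    have hφmono : ∀ x y : ℝ, 0 < x → x ≤ y → φ y ≤ φ x := by
      intro x y hx hxy
      simp only [hφ]
      have h1 : (0:ℝ) < t + x := by linarith
      have h2 : (0:ℝ) < t + y := by linarith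
      apply pow_le_pow_left₀ (one_div_nonneg.mpr h2.le)
      exact one_div_le_one_div_of_le h1 (by linarith)
    have hφnn : ∀ x : ℝ, 0 < x → 0 ≤ φ x := fun x hx => by
      simp only [hφ]; positivity
    have hterm : ∀ x : ℝ, 0 < x → ∀ k : ℕ,
        φ (((k:ℝ)+1)/x) = (x/(((k:ℝ)+1) + x*t))^p := by
      intro x hx k
      rw [hφ]
      have h1 : t + ((k:ℝ)+1)/x = ((((k:ℝ)+1)) + x*t)/x := by
        field_simp; ring
      simp only []
      rw [h1, one_div_div]
    have hsumφ : ∀ x : ℝ, 0 < x → Summable fun k : ℕ => φ (((k:ℝ)+1)/x) := by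
      intro x hx
      apply Summable.congr _ (fun k => (hterm x hx k).symm)
      apply Summable.of_nonneg_of_le (fun k => term_nonneg hx ht.le p k)
        (fun k => term_le hx ht.le p k)
      simpa [div_eq_mul_inv] using summable_aux (x ^ p) hp
    set Q : ℝ → ℝ := fun x => ∑' k : ℕ, φ (((k:ℝ)+1)/x) with hQdef
    have hQ : ∀ x : ℝ, 0 < x → Q x = ∑' k : ℕ, (x/(((k:ℝ)+1) + x*t))^p :=
      fun x hx => tsum_congr (hterm x hx)
    have hsplit : SS ε v p t = ∑ z, ε z * Q (v z) := by
      rw [SS]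
      have hVVrw : (fun k => VV ε v p k t)
          = fun k : ℕ => ∑ z, ε z * (v z/(((k:ℝ)+1) + v z * t))^p := by
        funext k; rw [VV]
      rw [hVVrw, Summable.tsum_finsetSum (fun z _ => by
        apply Summable.mul_left
        apply Summable.of_nonneg_of_le (fun k => term_nonneg (hv z) ht.le p k)
          (fun k => term_le (hv z) ht.le p k)
        simpa [div_eq_mul_inv] using summable_aux (v z ^ p) hp)]
      apply Finset.sum_congr rfl
      intro z _
      rw [tsum_mul_left, hQ (v z) (hv z)]
    have hexp : SS ε v p t
        = (∑ i, Q (α i)) + (∑ j, Q (β j)) + -2 * ∑ i, ∑ j, Q (lam i j) := by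
      rw [hsplit]
      simp only [hεdef, hvdef, Fintype.sum_sum_type, Fintype.sum_prod_type,
        Sum.elim_inl, Sum.elim_inr, one_mul]
      simp only [← Finset.mul_sum]
      try ring
    have hA : ∑ i, ∑ j, Q (lam i j) ≤ ∑ i, Q (α i) := by
      apply Finset.sum_le_sum
      intro i _
      have := tsum_superadd_finset φ hφmono hφnn hsumφ
        (Finset.univ_nonempty (α := Fin n)) (hlam i)
      rw [← hα i] at this
      exact this
    have hB : ∑ j, ∑ i, Q (lam i j) ≤ ∑ j, Q (β j) := by
      apply Finset.sum_le_sum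
      intro j _
      have := tsum_superadd_finset φ hφmono hφnn hsumφ
        (Finset.univ_nonempty (α := Fin m)) (fun i => hlam i j)
      rw [← hβ j] at this
      exact this
    have hcomm : ∑ j, ∑ i, Q (lam i j) = ∑ i, ∑ j, Q (lam i j) :=
      Finset.sum_comm
    rw [hexp]
    rw [hcomm] at hB
    linarith
  constructor
  · intro t ht
    rw [hd1 t ht]
    simpa using hSS1 t ht
  · intro k t ht
    rw [hiter k t ht]
    have h1 : (0:ℝ) ≤ SS ε v (k+2) t := hSSpos (k+2) (by omega) t ht
    have h2 : (-1:ℝ)^k * ((-1)^k * (((k+1).factorial : ℕ) : ℝ) * SS ε v (k+2) t)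
        = (((k+1).factorial : ℕ) : ℝ) * SS ε v (k+2) t := by
      rw [← mul_assoc, ← mul_assoc, ← mul_pow]
      norm_num
    rw [h2]
    positivity
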